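/- Assume θ·(C - V_H) > 2·V_H - V_L - C and (2 + θ)·C/(C - V_L) < R0 < (2 + θ)·C/(C - V_H). Then the set of equilibria of the co-evolutionary vector field in the square [0, 1]², i.e. {(x, n) ∈ [0,1]² : G(x, n) = (0, 0)}, consists of exactly the seven points (0,0), (0,1), (1,0), (1,1), (1 - C/(R0(C - V_L)), 0), (1 - C/(R0(C - V_H)), 1), and ((1 + θ)/(2 + θ), -(C(2 + θ - R0) + R0·V_L)/(R0·(V_H - V_L))). -/

import Mathlib

set_option maxHeartbeats 1000000


theorem stmt_11 (C V_H V_L θ R0 : ℝ)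
    (hCH : C > V_H) (hHL : V_H > V_L) (hL : V_L > 0) (hθ : θ > 0) (hR0 : R0 > 1)
    (V : ℝ → ℝ) (hV : ∀ n, V n = n * V_H + (1 - n) * V_L)
    (f : ℝ → ℝ)
    (hf1 : ∀ x : ℝ, x < 1 - 1 / R0 → f x = 1 - 1 / (R0 * (1 - x)))
    (hf2 : ∀ x : ℝ, x ≥ 1 - 1 / R0 → f x = 0)
    (G : ℝ × ℝ → ℝ × ℝ)
    (hG : ∀ p : ℝ × ℝ, G p = (p.1 * (1 - p.1) * (f p.1 * C - V p.2),
        p.2 * (1 - p.2) * (-p.1 + (1 + θ) * (1 - p.1))))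
    (hcase : θ * (C - V_H) > 2 * V_H - V_L - C)
    (hRlo : (2 + θ) * C / (C - V_L) < R0) (hRhi : R0 < (2 + θ) * C / (C - V_H)) :
    {p : ℝ × ℝ | 0 ≤ p.1 ∧ p.1 ≤ 1 ∧ 0 ≤ p.2 ∧ p.2 ≤ 1 ∧ G p = (0, 0)} =
      ({((0 : ℝ), (0 : ℝ)), (0, 1), (1, 0), (1, 1),
        (1 - C / (R0 * (C - V_L)), 0), (1 - C / (R0 * (C - V_H)), 1),
        ((1 + θ) / (2 + θ), -(C * (2 + θ - R0) + R0 * V_L) / (R0 * (V_H - V_L)))} :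
        Set (ℝ × ℝ)) := by
  have hC0 : (0:ℝ) < C := by linarith
  have hCL : (0:ℝ) < C - V_L := by linarith
  have hCHp : (0:ℝ) < C - V_H := by linarith
  have hR0p : (0:ℝ) < R0 := by linarith
  have hθ2 : (0:ℝ) < 2 + θ := by linarith
  have hRlo' : (2+θ)*C < R0*(C-V_L) := by
    have := (div_lt_iff₀ hCL).mp hRlo; linarith
  have hRhi' : R0*(C-V_H) < (2+θ)*C := by
    have := (lt_div_iff₀ hCHp).mp hRhi; linarith
  have hR2θ : 2+θ < R0 := by nlinarith
  have hsolve : ∀ v x : ℝ, 0 < v → v < C →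
      (f x * C = v ↔ x = 1 - C/(R0*(C-v))) := by
    intro v x hv0 hvC
    have hcv : 0 < R0 * (C - v) := mul_pos hR0p (by linarith)
    constructor
    · intro heq
      by_cases hx : x < 1 - 1/R0
      · rw [hf1 x hx] at heq
        have h1x : 1/R0 < 1 - x := by linarith
        have h1xp : 0 < 1 - x := lt_trans (by positivity) h1x
        have hRd : 0 < R0 * (1 - x) := by positivity
        have key : R0 * (1-x) * (C - v) = C := by
          field_simp at heq
          nlinarith [heq]
        have hq : C/(R0*(C-v)) = 1 - x := by
          rw [div_eq_iff (ne_of_gt hcv)]; linear_combination -key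
        linarith
      · rw [hf2 x (le_of_not_gt hx)] at heq
        simp at heq
        linarith
    · intro hx
      have h1x : 1 - x = C / (R0*(C-v)) := by rw [hx]; ring
      have hxlt : x < 1 - 1/R0 := by
        have : 1/R0 < C/(R0*(C-v)) := by
          rw [div_lt_div_iff₀ hR0p hcv]; nlinarith
        linarith [h1x, hx]
      rw [hf1 x hxlt, h1x]
      have hC1 : C / (R0*(C-v)) ≠ 0 := by positivity
      field_simp
      ring
  ext ⟨x, n⟩
  simp only [Set.mem_setOf_eq, Set.mem_insert_iff, Set.mem_singleton_iff,
    hG, hV, Prod.mk.injEq]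
  constructor
  · rintro ⟨hx0, hx1, hn0, hn1, heq1, heq2⟩
    rcases mul_eq_zero.mp heq2 with hnn | hE
    · rcases mul_eq_zero.mp hnn with hn | hn
      · -- n = 0
        subst hn
        have heq1' : x * (1-x) * (f x * C - V_L) = 0 := by
          convert heq1 using 2; ring
        rcases mul_eq_zero.mp heq1' with hxx | hfx
        · rcases mul_eq_zero.mp hxx with hx | hx
          · exact Or.inl ⟨hx, rfl⟩
          · exact Or.inr (Or.inr (Or.inl ⟨by linarith, rfl⟩))
        · have : f x * C = V_L := by linarith
          have := (hsolve V_L x hL (by linarith)).mp this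
          exact Or.inr (Or.inr (Or.inr (Or.inr (Or.inl ⟨this, rfl⟩))))
      · -- 1 - n = 0
        have hn1' : n = 1 := by linarith
        subst hn1'
        have heq1' : x * (1-x) * (f x * C - V_H) = 0 := by
          convert heq1 using 2; ring
        rcases mul_eq_zero.mp heq1' with hxx | hfx
        · rcases mul_eq_zero.mp hxx with hx | hx
          · exact Or.inr (Or.inl ⟨hx, rfl⟩)
          · exact Or.inr (Or.inr (Or.inr (Or.inl ⟨by linarith, rfl⟩)))
        · have : f x * C = V_H := by linarith
          have := (hsolve V_H x (by linarith) (by linarith)).mp this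
          exact Or.inr (Or.inr (Or.inr (Or.inr (Or.inr (Or.inl ⟨this, rfl⟩)))))
    · -- interior x
      have hxeq : x = (1+θ)/(2+θ) := by
        rw [eq_div_iff (ne_of_gt hθ2)]; linarith
      have hx0' : 0 < x := by rw [hxeq]; positivity
      have hx1' : x < 1 := by
        rw [hxeq, div_lt_one hθ2]; linarith
      have haux1 : 0 ≤ n * (V_H - V_L) := mul_nonneg hn0 (by linarith)
      have haux2 : 0 ≤ (1-n) * (V_H - V_L) := mul_nonneg (by linarith) (by linarith)
      have hvL : (0:ℝ) < n * V_H + (1-n) * V_L := by nlinarith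
      have hvC : n * V_H + (1-n) * V_L < C := by nlinarith
      have hfx : f x * C = n * V_H + (1-n) * V_L := by
        have hne : x * (1-x) ≠ 0 := ne_of_gt (mul_pos hx0' (by linarith))
        rcases mul_eq_zero.mp heq1 with h | h
        · exact absurd h hne
        · linarith
      have hxv := (hsolve _ x hvL hvC).mp hfx
      have hkey : R0 * (C - (n * V_H + (1-n) * V_L)) = (2+θ)*C := by
        have h1x : 1 - x = C / (R0*(C-(n * V_H + (1-n) * V_L))) := by
          rw [hxv]; ring
        have h1x2 : 1 - x = 1/(2+θ) := by rw [hxeq]; field_simp; ring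
        have hcv : 0 < R0 * (C - (n * V_H + (1-n) * V_L)) := mul_pos hR0p (by linarith)
        rw [h1x2] at h1x
        field_simp at h1x
        have hne : C - (n * V_H + (1-n) * V_L) ≠ 0 := (sub_pos.mpr hvC).ne'
        rw [h1x]; field_simp
      have hneq : n = -(C * (2 + θ - R0) + R0 * V_L) / (R0 * (V_H - V_L)) := by
        rw [eq_div_iff (ne_of_gt (mul_pos hR0p (by linarith : (0:ℝ) < V_H - V_L)))]
        linear_combination -hkey
      exact Or.inr (Or.inr (Or.inr (Or.inr (Or.inr (Or.inr ⟨hxeq, hneq⟩)))))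
  · rintro (⟨hx, hn⟩ | ⟨hx, hn⟩ | ⟨hx, hn⟩ | ⟨hx, hn⟩ | ⟨hx, hn⟩ | ⟨hx, hn⟩ | ⟨hx, hn⟩) <;>
      subst hx <;> subst hn
    · exact ⟨le_refl 0, by norm_num, le_refl 0, by norm_num, by ring, by ring⟩
    · exact ⟨le_refl 0, by norm_num, by norm_num, le_refl 1, by ring, by ring⟩
    · exact ⟨by norm_num, le_refl 1, le_refl 0, by norm_num, by ring, by ring⟩
    · exact ⟨by norm_num, le_refl 1, by norm_num, le_refl 1, by ring, by ring⟩
    · refine ⟨?_, ?_, le_refl 0, by norm_num, ?_, by ring⟩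
      · have : C / (R0*(C-V_L)) ≤ 1 := by
          rw [div_le_one (by positivity)]; nlinarith
        linarith
      · have : 0 < C / (R0*(C-V_L)) := by positivity
        linarith
      · have hfx : f (1 - C/(R0*(C-V_L))) * C = V_L :=
          (hsolve V_L _ hL (by linarith)).mpr rfl
        have h0 : f (1 - C/(R0*(C-V_L))) * C - (0 * V_H + (1-0) * V_L) = 0 := by
          rw [hfx]; ring
        rw [h0]; ring
    · refine ⟨?_, ?_, by norm_num, le_refl 1, ?_, by ring⟩
      · have : C / (R0*(C-V_H)) ≤ 1 := by
          rw [div_le_one (by positivity)]; nlinarith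
        linarith
      · have : 0 < C / (R0*(C-V_H)) := by positivity
        linarith
      · have hfx : f (1 - C/(R0*(C-V_H))) * C = V_H :=
          (hsolve V_H _ (by linarith) (by linarith)).mpr rfl
        have h0 : f (1 - C/(R0*(C-V_H))) * C - (1 * V_H + (1-1) * V_L) = 0 := by
          rw [hfx]; ring
        rw [h0]; ring
    · -- interior point
      have hHLp : (0:ℝ) < V_H - V_L := by linarith
      have hnum : 0 < -(C * (2 + θ - R0) + R0 * V_L) := by nlinarith
      have hden : (0:ℝ) < R0 * (V_H - V_L) := by positivity
      set N := -(C * (2 + θ - R0) + R0 * V_L) / (R0 * (V_H - V_L)) with hN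
      have hNval : N * (R0 * (V_H - V_L)) = -(C * (2 + θ - R0) + R0 * V_L) := by
        rw [hN]; field_simp
      have hN0 : 0 ≤ N := le_of_lt (by rw [hN]; positivity)
      have hN1 : N ≤ 1 := by
        rw [hN, div_le_one hden]; nlinarith
      have hx0 : (0:ℝ) ≤ (1+θ)/(2+θ) := le_of_lt (div_pos (by linarith) hθ2)
      have hx1 : (1+θ)/(2+θ) ≤ 1 := by
        rw [div_le_one hθ2]; linarith
      refine ⟨hx0, hx1, hN0, hN1, ?_, ?_⟩
      · -- first component
        have haux1 : 0 ≤ N * (V_H - V_L) := mul_nonneg hN0 (by linarith)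
        have haux2 : 0 ≤ (1-N) * (V_H - V_L) := mul_nonneg (by linarith) (by linarith)
        have hvL : (0:ℝ) < N * V_H + (1-N) * V_L := by nlinarith
        have hvC : N * V_H + (1-N) * V_L < C := by nlinarith
        have hkey : R0 * (C - (N * V_H + (1-N) * V_L)) = (2+θ)*C := by
          nlinarith [hNval]
        have hxeq : (1+θ)/(2+θ) = 1 - C / (R0 * (C - (N * V_H + (1-N) * V_L))) := by
          rw [hkey]
          field_simp
          ring
        have hfx : f ((1+θ)/(2+θ)) * C = N * V_H + (1-N) * V_L :=
          (hsolve _ _ hvL hvC).mpr hxeq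
        rw [hfx]; ring
      · -- second component
        have h0 : -((1+θ)/(2+θ)) + (1 + θ) * (1 - (1+θ)/(2+θ)) = 0 := by
          field_simp
          ring
        rw [h0]; ring
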